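/- Let f be an odd positive integer, t a positive divisor of f with f − t = 4tm for a nonnegative integer m, and set n = (f−1)/2. Then for each ε ∈ {1, −1}, gcd(2^(f−t) − 1, 2^f + ε·2^(n+1) + 1) = 2^t + ε·(−1)^m·2^((t+1)/2) + 1. -/

import Mathlib

private lemma sub_one_dvd (x : ℤ) (k : ℕ) : x - 1 ∣ x ^ k - 1 := by
  simpa using sub_dvd_pow_sub_pow x 1 k
private lemma add_one_dvd (x : ℤ) (k : ℕ) : x + 1 ∣ x ^ k - (-1) ^ k := by
  simpa [sub_neg_eq_add] using sub_dvd_pow_sub_pow x (-1) k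
private lemma odd_of_dvd {a b : ℤ} (h : a ∣ b) (hb : Odd b) : Odd a := by
  rcases Int.even_or_odd a with he | ho
  · obtain ⟨c, hc⟩ := he
    obtain ⟨d, hd⟩ := h
    exact absurd hb (Int.not_odd_iff_even.mpr ⟨c * d, by rw [hd, hc]; ring⟩)
  · exact ho
private lemma gcd_one_helper {a b : ℤ} (k : ℕ) (ha : Odd a)
    (h2 : (Int.gcd a b : ℤ) ∣ 2 ^ k) : IsCoprime a b := by
  rw [Int.isCoprime_iff_gcd_eq_one]
  have hg2 : ¬ (2 ∣ Int.gcd a b) := by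
    intro h
    have h2a : (2:ℤ) ∣ a := dvd_trans (by exact_mod_cast h) (Int.gcd_dvd_left a b)
    obtain ⟨c, hc⟩ := h2a
    exact absurd ha (Int.not_odd_iff_even.mpr ⟨c, by rw [hc]; ring⟩)
  have h3 : Int.gcd a b ∣ 2 ^ k := by exact_mod_cast h2
  have hcop : Nat.Coprime (Int.gcd a b) (2 ^ k) :=
    Nat.Coprime.pow_right k ((Nat.Prime.coprime_iff_not_dvd Nat.prime_two).mpr hg2).symm
  have h4 := Nat.gcd_eq_left h3
  rw [Nat.Coprime] at hcop
  omega

theorem gcd_case_4tm (n f t m : ℕ) (hn : 1 ≤ n) (hf : f = 2 * n + 1)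
    (htpos : 0 < t) (hdvd : t ∣ f) (hm : f - t = 4 * t * m)
    (ε : ℤ) (hε : ε = 1 ∨ ε = -1) :
    (Int.gcd (2 ^ (f - t) - 1) (2 ^ f + ε * 2 ^ (n + 1) + 1) : ℤ) =
      2 ^ t + ε * (-1) ^ m * 2 ^ ((t + 1) / 2) + 1 := by
  subst hf
  have h2t : ¬ 2 ∣ t := fun h => by have := h.trans hdvd; omega
  obtain ⟨u, hu⟩ : ∃ u, t = 2 * u + 1 := ⟨t / 2, by omega⟩
  subst hu
  have htle : 2 * u + 1 ≤ 2 * n + 1 := Nat.le_of_dvd (by omega) hdvd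
  obtain ⟨b, hb⟩ : ∃ b, b = (2 * u + 1) * m := ⟨_, rfl⟩
  have hm' : 2 * n + 1 - (2 * u + 1) = 4 * b := by rw [hb, ← mul_assoc]; exact hm
  have hfb : 2 * n + 1 = 4 * b + (2 * u + 1) := by omega
  have hn1 : n + 1 = 2 * b + (u + 1) := by omega
  have hdiv : (2 * u + 1 + 1) / 2 = u + 1 := by omega
  rw [hm', hfb, hn1, hdiv]
  have hε2 : ε * ε = 1 := by rcases hε with h | h <;> rw [h] <;> norm_num
  have hm2 : ((-1 : ℤ)) ^ m * (-1) ^ m = 1 := by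
    rw [← pow_add]; exact Even.neg_one_pow ⟨m, rfl⟩
  have he2 : (ε * (-1) ^ m) * (ε * (-1) ^ m) = 1 := by
    linear_combination ((-1:ℤ)) ^ m * (-1) ^ m * hε2 + hm2
  set D : ℤ := 2 ^ (4 * b) - 1 with hD
  set A : ℤ := 2 ^ (4 * b + (2 * u + 1)) + ε * 2 ^ (2 * b + (u + 1)) + 1 with hA
  set P : ℤ := 2 ^ (2 * u + 1) + ε * (-1) ^ m * 2 ^ (u + 1) + 1 with hP
  set Q : ℤ := 2 ^ (2 * u + 1) - ε * (-1) ^ m * 2 ^ (u + 1) + 1 with hQ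
  set B : ℤ := 2 ^ (4 * b + (2 * u + 1)) - ε * 2 ^ (2 * b + (u + 1)) + 1 with hB
  -- basic multiplicative identities
  have hPQ : P * Q = 2 ^ (4 * u + 2) + 1 := by
    rw [hP, hQ]; linear_combination (-(2:ℤ) ^ (2 * u + 2)) * he2
  have hAB : A * B = 2 ^ (8 * b + 4 * u + 2) + 1 := by
    rw [hA, hB]; linear_combination (-(2:ℤ) ^ (4 * b + 2 * u + 2)) * hε2
  -- divisibility chains
  have hP_PQ : P ∣ 2 ^ (4 * u + 2) + 1 := hPQ ▸ dvd_mul_right P Q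
  have hQ_PQ : Q ∣ 2 ^ (4 * u + 2) + 1 := hPQ ▸ dvd_mul_left Q P
  have h42 : (2:ℤ) ^ (4 * u + 2) + 1 ∣ 2 ^ (8 * u + 4) - 1 :=
    ⟨2 ^ (4 * u + 2) - 1, by ring⟩
  have h84D : (2:ℤ) ^ (8 * u + 4) - 1 ∣ D := by
    have hbe : 4 * b = (8 * u + 4) * m := by rw [hb]; ring
    rw [hD, hbe, pow_mul]
    exact sub_one_dvd _ m
  have hXY : (2:ℤ) ^ (4 * u + 2) + 1 ∣ 2 ^ (2 * b) - (-1) ^ m := by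
    have hbe : 2 * b = (4 * u + 2) * m := by rw [hb]; ring
    rw [hbe, pow_mul]
    exact add_one_dvd _ m
  have hPD : P ∣ D := hP_PQ.trans (h42.trans h84D)
  have hQD : Q ∣ D := hQ_PQ.trans (h42.trans h84D)
  have hsplit : A - P = 2 ^ (2 * u + 1) * D + ε * 2 ^ (u + 1) * (2 ^ (2 * b) - (-1) ^ m) := by
    rw [hA, hP, hD]; ring
  have hPA : P ∣ A := by
    have h1 : P ∣ A - P := by
      rw [hsplit]
      exact dvd_add (hPD.mul_left _) ((hP_PQ.trans hXY).mul_left _)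
    have h2 : A = P + (A - P) := by ring
    rw [h2]; exact dvd_add dvd_rfl h1
  have hQAP : Q ∣ A - P := by
    rw [hsplit]
    exact dvd_add (hQD.mul_left _) ((hQ_PQ.trans hXY).mul_left _)
  -- oddness
  have hAodd : Odd A := ⟨2 ^ (4 * b + 2 * u) + ε * 2 ^ (2 * b + u), by rw [hA]; ring⟩
  have hPodd : Odd P := ⟨2 ^ (2 * u) + ε * (-1) ^ m * 2 ^ u, by rw [hP]; ring⟩
  -- the gcd
  have hgD : (Int.gcd D A : ℤ) ∣ D := Int.gcd_dvd_left _ _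
  have hgA : (Int.gcd D A : ℤ) ∣ A := Int.gcd_dvd_right _ _
  have hgodd : Odd ((Int.gcd D A : ℤ)) := odd_of_dvd hgA hAodd
  have hg2f : (Int.gcd D A : ℤ) ∣ 2 ^ (8 * b + 4 * u + 2) + 1 :=
    hgA.trans (hAB ▸ dvd_mul_right A B)
  have hg16 : (Int.gcd D A : ℤ) ∣ 2 ^ (16 * b) - 1 := by
    refine hgD.trans ?_
    have hpe : (2:ℤ) ^ (16 * b) = (2 ^ (4 * b)) ^ 4 := by
      rw [← pow_mul]; congr 1; omega
    rw [hD, hpe]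
    exact sub_one_dvd _ 4
  have hg4f : (Int.gcd D A : ℤ) ∣ 2 ^ (16 * b + 8 * u + 4) - 1 :=
    hg2f.trans ⟨2 ^ (8 * b + 4 * u + 2) - 1, by ring⟩
  have hg84 : (Int.gcd D A : ℤ) ∣ 2 ^ (8 * u + 4) - 1 := by
    have hid : (2:ℤ) ^ (8 * u + 4) - 1 =
        (2 ^ (16 * b + 8 * u + 4) - 1) - 2 ^ (8 * u + 4) * (2 ^ (16 * b) - 1) := by ring
    rw [hid]
    exact dvd_sub hg4f (hg16.mul_left _)
  -- coprime to 2^(4u+2) - 1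
  have hcopg1 : IsCoprime ((Int.gcd D A : ℤ)) ((2:ℤ) ^ (4 * u + 2) - 1) := by
    apply gcd_one_helper 1 hgodd
    have d1 : (Int.gcd ((Int.gcd D A : ℤ)) ((2:ℤ) ^ (4 * u + 2) - 1) : ℤ) ∣
        2 ^ (8 * b + 4 * u + 2) + 1 := (Int.gcd_dvd_left _ _).trans hg2f
    have hd1 : (2:ℤ) ^ (4 * u + 2) - 1 ∣ 2 ^ (8 * b + 4 * u + 2) - 1 := by
      rw [show 8 * b + 4 * u + 2 = (4 * u + 2) * (4 * m + 1) by rw [hb]; ring, pow_mul]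
      exact sub_one_dvd _ _
    have d2 : (Int.gcd ((Int.gcd D A : ℤ)) ((2:ℤ) ^ (4 * u + 2) - 1) : ℤ) ∣
        2 ^ (8 * b + 4 * u + 2) - 1 := (Int.gcd_dvd_right _ _).trans hd1
    have hid : (2:ℤ) ^ 1 = (2 ^ (8 * b + 4 * u + 2) + 1) - (2 ^ (8 * b + 4 * u + 2) - 1) := by
      ring
    rw [hid]
    exact dvd_sub d1 d2
  have hg42 : (Int.gcd D A : ℤ) ∣ 2 ^ (4 * u + 2) + 1 := by
    apply hcopg1.dvd_of_dvd_mul_left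
    have hid : (2:ℤ) ^ (8 * u + 4) - 1 = (2 ^ (4 * u + 2) - 1) * (2 ^ (4 * u + 2) + 1) := by
      ring
    exact hid ▸ hg84
  -- coprime to Q
  have hsub2 : (ε * (-1) ^ m) * (P - Q) = 2 ^ (u + 2) := by
    rw [hP, hQ]; linear_combination (2:ℤ) ^ (u + 2) * he2
  have hcopgQ : IsCoprime ((Int.gcd D A : ℤ)) Q := by
    apply gcd_one_helper (u + 2) hgodd
    have c1 : (Int.gcd ((Int.gcd D A : ℤ)) Q : ℤ) ∣ A := (Int.gcd_dvd_left _ _).trans hgA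
    have c2 : (Int.gcd ((Int.gcd D A : ℤ)) Q : ℤ) ∣ Q := Int.gcd_dvd_right _ _
    have cP : (Int.gcd ((Int.gcd D A : ℤ)) Q : ℤ) ∣ P := by
      have hid : P = A - (A - P) := by ring
      rw [hid]
      exact dvd_sub c1 (c2.trans hQAP)
    exact hsub2 ▸ ((dvd_sub cP c2).mul_left _)
  have hgP : (Int.gcd D A : ℤ) ∣ P := by
    apply hcopgQ.dvd_of_dvd_mul_right
    rw [hPQ]; exact hg42
  have hPg : P ∣ (Int.gcd D A : ℤ) := Int.dvd_coe_gcd hPD hPA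
  have hx : ε * (-1) ^ m = 1 ∨ ε * (-1) ^ m = -1 :=
    Int.isUnit_iff.mp (IsUnit.of_mul_eq_one _ he2)
  have hPpos : 0 < P := by
    rw [hP]
    rcases hx with h | h <;> rw [h]
    · positivity
    · have hle : (2:ℤ) ^ (u + 1) ≤ 2 ^ (2 * u + 1) :=
        pow_le_pow_right₀ (by norm_num) (by omega)
      nlinarith
  exact Int.dvd_antisymm (Int.natCast_nonneg _) (le_of_lt hPpos) hgP hPg
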